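/- arXiv:2405.02700 — 2 statements merged into one kernel-verified Lean document; each statement's English description precedes it below -/
import Mathlib

section
/- For any positive semidefinite symmetric matrices A, B ∈ ℝ^{d×d}, the unique PSD square roots satisfy ‖√A − √B‖₂ ≤ √(‖A − B‖₂), where ‖·‖₂ denotes the spectral (operator) norm. -/
open Matrix

/-- The spectral (ℓ₂ operator) norm of a square real matrix. -/
noncomputable def specNorm {N : ℕ} (A : Matrix (Fin N) (Fin N) ℝ) : ℝ :=
  ‖Matrix.toEuclideanCLM (𝕜 := ℝ) A‖

noncomputable def Matrix.PosSemidef.sqrt {n 𝕜 : Type*} [Fintype n] [DecidableEq n] [RCLike 𝕜]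
    [PartialOrder 𝕜] [StarOrderedRing 𝕜] {A : Matrix n n 𝕜} (hA : A.PosSemidef) : Matrix n n 𝕜 :=
  hA.1.eigenvectorUnitary.1 * diagonal ((↑) ∘ Real.sqrt ∘ hA.1.eigenvalues) *
  (star hA.1.eigenvectorUnitary : Matrix n n 𝕜)

lemma Matrix.PosSemidef.posSemidef_sqrt {n : Type*} [Fintype n] [DecidableEq n]
    {A : Matrix n n ℝ} (hA : A.PosSemidef) : hA.sqrt.PosSemidef := by
  unfold Matrix.PosSemidef.sqrt
  have : (star hA.1.eigenvectorUnitary : Matrix n n ℝ) = (hA.1.eigenvectorUnitary : Matrix n n ℝ)ᴴ := rfl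
  rw [this]
  apply PosSemidef.mul_mul_conjTranspose_same
  rw [posSemidef_diagonal_iff]; intro i; simp [Real.sqrt_nonneg]

lemma Matrix.PosSemidef.sqrt_mul_self {n : Type*} [Fintype n] [DecidableEq n]
    {A : Matrix n n ℝ} (hA : A.PosSemidef) : hA.sqrt * hA.sqrt = A := by
  unfold Matrix.PosSemidef.sqrt
  have hU : (star hA.1.eigenvectorUnitary : Matrix n n ℝ) * (hA.1.eigenvectorUnitary : Matrix n n ℝ) = 1 :=
    Unitary.star_mul_self_of_mem hA.1.eigenvectorUnitary.2
  have hD : diagonal ((↑) ∘ Real.sqrt ∘ hA.1.eigenvalues) * diagonal ((↑) ∘ Real.sqrt ∘ hA.1.eigenvalues)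
      = diagonal (RCLike.ofReal ∘ hA.1.eigenvalues : n → ℝ) := by
    rw [diagonal_mul_diagonal]; congr 1; funext i
    simp [Real.mul_self_sqrt (hA.eigenvalues_nonneg i)]
  conv_rhs => rw [hA.1.spectral_theorem]
  rw [Unitary.conjStarAlgAut_apply]
  calc _ = (hA.1.eigenvectorUnitary : Matrix n n ℝ) * diagonal ((↑) ∘ Real.sqrt ∘ hA.1.eigenvalues) *
      ((star hA.1.eigenvectorUnitary : Matrix n n ℝ) * (hA.1.eigenvectorUnitary : Matrix n n ℝ)) *
      diagonal ((↑) ∘ Real.sqrt ∘ hA.1.eigenvalues) * (star hA.1.eigenvectorUnitary : Matrix n n ℝ) := by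
        simp only [Matrix.mul_assoc]; rfl
    _ = _ := by rw [hU, Matrix.mul_one, Matrix.mul_assoc _ (diagonal _) (diagonal _), hD]

lemma inner_toEuclideanCLM_nonneg {d : ℕ} {M : Matrix (Fin d) (Fin d) ℝ}
    (hM : M.PosSemidef) (x : EuclideanSpace ℝ (Fin d)) :
    (0 : ℝ) ≤ inner ℝ x ((Matrix.toEuclideanCLM (𝕜 := ℝ) M) x) := by
  have h := hM.dotProduct_mulVec_nonneg (WithLp.ofLp x)
  rw [real_inner_comm, EuclideanSpace.inner_eq_star_dotProduct]
  simpa using h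

set_option maxHeartbeats 1000000 in
/-- For PSD symmetric matrices `A, B`, the unique PSD square roots satisfy
`‖√A − √B‖₂ ≤ √(‖A − B‖₂)` in spectral norm. -/
theorem sqrt_specNorm_holder (d : ℕ) (A B : Matrix (Fin d) (Fin d) ℝ)
    (hA : A.PosSemidef) (hB : B.PosSemidef) :
    specNorm (hA.sqrt - hB.sqrt) ≤ Real.sqrt (specNorm (A - B)) := by
  classical
  rw [specNorm, specNorm]
  set C : Matrix (Fin d) (Fin d) ℝ := hA.sqrt - hB.sqrt with hCdef
  set T : EuclideanSpace ℝ (Fin d) →L[ℝ] EuclideanSpace ℝ (Fin d) :=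
    Matrix.toEuclideanCLM (𝕜 := ℝ) C with hTdef
  set TA : EuclideanSpace ℝ (Fin d) →L[ℝ] EuclideanSpace ℝ (Fin d) :=
    Matrix.toEuclideanCLM (𝕜 := ℝ) hA.sqrt with hTAdef
  set TB : EuclideanSpace ℝ (Fin d) →L[ℝ] EuclideanSpace ℝ (Fin d) :=
    Matrix.toEuclideanCLM (𝕜 := ℝ) hB.sqrt with hTBdef
  set D : EuclideanSpace ℝ (Fin d) →L[ℝ] EuclideanSpace ℝ (Fin d) :=
    Matrix.toEuclideanCLM (𝕜 := ℝ) (A - B) with hDdef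
  set N : ℝ := ‖D‖ with hNdef
  have hN0 : 0 ≤ N := norm_nonneg _
  have hCherm : C.IsHermitian := hA.posSemidef_sqrt.1.sub hB.posSemidef_sqrt.1
  have hTsymm : LinearMap.IsSymmetric
      (T : EuclideanSpace ℝ (Fin d) →ₗ[ℝ] EuclideanSpace ℝ (Fin d)) := by
    rw [hTdef, Matrix.coe_toEuclideanCLM_eq_toEuclideanLin]
    exact Matrix.isHermitian_iff_isSymmetric.mp hCherm
  have hn : Module.finrank ℝ (EuclideanSpace ℝ (Fin d)) = d := finrank_euclideanSpace_fin
  set b := hTsymm.eigenvectorBasis hn with hbdef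
  set μ := hTsymm.eigenvalues hn with hμdef
  -- key inequality for each eigenvalue
  have key : ∀ i, μ i ^ 2 ≤ N := by
    intro i
    set v : EuclideanSpace ℝ (Fin d) := b i with hvdef
    have hv1 : ‖v‖ = 1 := b.orthonormal.1 i
    have hTv : T v = μ i • v := by
      have := hTsymm.apply_eigenvectorBasis hn i
      simpa [← hbdef, ← hμdef, ← hvdef] using this
    set tA : ℝ := inner ℝ v (TA v) with htAdef
    set tB : ℝ := inner ℝ v (TB v) with htBdef
    have htA0 : 0 ≤ tA := inner_toEuclideanCLM_nonneg hA.posSemidef_sqrt v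
    have htB0 : 0 ≤ tB := inner_toEuclideanCLM_nonneg hB.posSemidef_sqrt v
    have hTsub : T = TA - TB := by
      rw [hTdef, hTAdef, hTBdef, hCdef, map_sub]
    have hμeq : μ i = tA - tB := by
      have h1 : (inner ℝ v (T v) : ℝ) = μ i := by
        rw [hTv, real_inner_smul_right, real_inner_self_eq_norm_sq, hv1]
        ring
      rw [← h1, hTsub]
      simp [htAdef, htBdef, inner_sub_right]
    have hDsplit : D = TA * T + T * TB := by
      have hmat : A - B = hA.sqrt * C + C * hB.sqrt := by
        rw [hCdef]
        have h1 : hA.sqrt * hA.sqrt = A := hA.sqrt_mul_self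
        have h2 : hB.sqrt * hB.sqrt = B := hB.sqrt_mul_self
        noncomm_ring [h1, h2]
      rw [hDdef, hmat, map_add, _root_.map_mul, _root_.map_mul]
    have hDv : (inner ℝ v (D v) : ℝ) = μ i * (tA + tB) := by
      rw [hDsplit]
      have h1 : (inner ℝ v ((TA * T) v) : ℝ) = μ i * tA := by
        rw [ContinuousLinearMap.mul_apply, hTv, _root_.map_smul, real_inner_smul_right, htAdef]
      have h2 : (inner ℝ v ((T * TB) v) : ℝ) = μ i * tB := by
        have hs := hTsymm (TB v) v
        rw [ContinuousLinearMap.coe_coe] at hs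
        rw [ContinuousLinearMap.mul_apply, ← real_inner_comm, hs, hTv,
          real_inner_smul_right, real_inner_comm, htBdef]
      rw [ContinuousLinearMap.add_apply, inner_add_right, h1, h2]
      ring
    have hbound : |(inner ℝ v (D v) : ℝ)| ≤ N := by
      calc |(inner ℝ v (D v) : ℝ)| ≤ ‖v‖ * ‖D v‖ := abs_real_inner_le_norm _ _
        _ ≤ ‖v‖ * (‖D‖ * ‖v‖) :=
            mul_le_mul_of_nonneg_left (D.le_opNorm v) (norm_nonneg v)
        _ = N := by rw [hv1, hNdef]; ring
    rw [hDv, abs_mul] at hbound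
    have habs : |tA + tB| = tA + tB := abs_of_nonneg (by linarith)
    rw [habs] at hbound
    nlinarith [abs_nonneg (μ i), le_abs_self (μ i), neg_abs_le (μ i),
      mul_nonneg (abs_nonneg (μ i)) htA0, mul_nonneg (abs_nonneg (μ i)) htB0]
  -- conclude: ‖T x‖ ≤ √N ‖x‖
  have hopbound : ∀ x : EuclideanSpace ℝ (Fin d), ‖T x‖ ≤ Real.sqrt N * ‖x‖ := by
    intro x
    have hrepr : ∀ i, b.repr (T x) i = μ i * b.repr x i := by
      intro i
      have := hTsymm.eigenvectorBasis_apply_self_apply hn x i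
      simpa [← hbdef, ← hμdef] using this
    have hsq : ‖T x‖ ^ 2 ≤ N * ‖x‖ ^ 2 := by
      have e1 : ‖T x‖ ^ 2 = ∑ i, ‖b.repr (T x) i‖ ^ 2 := by
        rw [← b.repr.norm_map (T x), PiLp.norm_sq_eq_of_L2]
      have e2 : ‖x‖ ^ 2 = ∑ i, ‖b.repr x i‖ ^ 2 := by
        rw [← b.repr.norm_map x, PiLp.norm_sq_eq_of_L2]
      rw [e1, e2, Finset.mul_sum]
      apply Finset.sum_le_sum
      intro i _
      rw [hrepr i]
      rw [Real.norm_eq_abs, Real.norm_eq_abs, abs_mul, mul_pow]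
      have h := key i
      rw [sq_abs, sq_abs]
      nlinarith [sq_nonneg (b.repr x i)]
    calc ‖T x‖ = Real.sqrt (‖T x‖ ^ 2) := (Real.sqrt_sq (norm_nonneg _)).symm
      _ ≤ Real.sqrt (N * ‖x‖ ^ 2) := Real.sqrt_le_sqrt hsq
      _ = Real.sqrt N * ‖x‖ := by
          rw [Real.sqrt_mul hN0, Real.sqrt_sq (norm_nonneg _)]
  exact ContinuousLinearMap.opNorm_le_bound T (Real.sqrt_nonneg N) hopbound
end

section
/- (Hoffman–Wielandt) If A, B ∈ ℝ^{d×d} are symmetric matrices with eigenvalues λ_1 ≥ … ≥ λ_d and μ_1 ≥ … ≥ μ_d respectively (sorted in decreasing order), then Σ_{i=1}^d (λ_i − μ_i)² ≤ ‖A − B‖_F². -/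
open Polynomial

open Matrix Finset in
lemma hw_charpoly_diagonal {d : ℕ} (v : Fin d → ℝ) :
    (Matrix.diagonal v).charpoly = ∏ i, (X - C (v i)) := by
  have h : charmatrix (Matrix.diagonal v) = Matrix.diagonal (fun i => (X : ℝ[X]) - C (v i)) := by
    ext i j
    rcases eq_or_ne i j with rfl | hij
    · simp [charmatrix_apply_eq]
    · simp [charmatrix_apply_ne _ _ _ hij, Matrix.diagonal_apply_ne _ hij]
  rw [Matrix.charpoly, h, Matrix.det_diagonal]

open Matrix Finset in
lemma hw_charpoly_conj {d : ℕ} (U V D : Matrix (Fin d) (Fin d) ℝ)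
    (hUV : U * V = 1) :
    (U * D * V).charpoly = D.charpoly := by
  have hmap : ∀ M N : Matrix (Fin d) (Fin d) ℝ,
      (M * N).map (C : ℝ →+* ℝ[X]) = M.map C * N.map C := fun M N =>
    (Matrix.map_mul (f := (C : ℝ →+* ℝ[X])))
  have h1 : U.map (C : ℝ →+* ℝ[X]) * V.map C = 1 := by
    rw [← hmap, hUV, Matrix.map_one _ (map_zero _) (map_one _)]
  have hc : charmatrix (U * D * V) = U.map (C : ℝ →+* ℝ[X]) * charmatrix D * V.map C := by
    rw [charmatrix, charmatrix, Matrix.mul_sub, Matrix.sub_mul]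
    congr 1
    · have hcomm : Matrix.scalar (Fin d) (X : ℝ[X]) * V.map C
          = V.map C * Matrix.scalar (Fin d) X :=
        (Matrix.scalar_commute X (fun r => Commute.all _ _) (V.map C))
      rw [Matrix.mul_assoc, hcomm, ← Matrix.mul_assoc, h1, Matrix.one_mul]
    · rw [RingHom.mapMatrix_apply, RingHom.mapMatrix_apply, hmap, hmap]
  rw [Matrix.charpoly, Matrix.charpoly, hc, Matrix.det_mul, Matrix.det_mul]
  have hd : (U.map (C : ℝ →+* ℝ[X])).det * (V.map C).det = 1 := by
    rw [← Matrix.det_mul, h1, Matrix.det_one]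
  linear_combination (charmatrix D).det * hd

open Finset in
lemma hw_exists_perm_of_multiset_eq : ∀ {d : ℕ} (f g : Fin d → ℝ),
    Multiset.map f Finset.univ.val = Multiset.map g Finset.univ.val →
    ∃ σ : Equiv.Perm (Fin d), f = g ∘ σ
  | 0, f, g, _ => ⟨Equiv.refl _, funext fun i => i.elim0⟩
  | (d+1), f, g, h => by
    classical
    have huniv : (Finset.univ : Finset (Fin (d+1))).val
        = (0 : Fin (d+1)) ::ₘ Multiset.map Fin.succ (Finset.univ : Finset (Fin d)).val := by
      rw [Fin.univ_succ, Finset.cons_val, Finset.map_val]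
      rfl
    have hf0 : f 0 ∈ Multiset.map g Finset.univ.val := by
      rw [← h, huniv, Multiset.map_cons]
      exact Multiset.mem_cons_self _ _
    obtain ⟨j, _, hj⟩ := Multiset.mem_map.1 hf0
    set g' : Fin (d+1) → ℝ := g ∘ Equiv.swap 0 j with hg'
    have hswapuniv : Multiset.map (⇑(Equiv.swap 0 j)) Finset.univ.val
        = (Finset.univ : Finset (Fin (d+1))).val := by
      calc Multiset.map (⇑(Equiv.swap 0 j)) Finset.univ.val
          = (Finset.univ.map (Equiv.swap 0 j).toEmbedding).val := by
            rw [Finset.map_val]; rfl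
        _ = _ := by rw [Finset.map_univ_equiv]
    have hswap : Multiset.map g' Finset.univ.val = Multiset.map g Finset.univ.val := by
      rw [hg']
      calc Multiset.map (g ∘ ⇑(Equiv.swap 0 j)) Finset.univ.val
          = Multiset.map g (Multiset.map (⇑(Equiv.swap 0 j)) Finset.univ.val) := by
            rw [Multiset.map_map]
        _ = _ := by rw [hswapuniv]
    have hg'0 : g' 0 = f 0 := by
      rw [hg']; show g (Equiv.swap 0 j 0) = f 0
      rw [Equiv.swap_apply_left, hj]
    have h' : Multiset.map f Finset.univ.val = Multiset.map g' Finset.univ.val := by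
      rw [h, hswap]
    rw [huniv, Multiset.map_cons, Multiset.map_cons, Multiset.map_map, Multiset.map_map,
      hg'0] at h'
    have htail := (Multiset.cons_inj_right (f 0)).1 h'
    obtain ⟨σ, hσ⟩ := hw_exists_perm_of_multiset_eq (f ∘ Fin.succ) (g' ∘ Fin.succ) htail
    refine ⟨((Equiv.Perm.decomposeFin.symm (0, σ)).trans (Equiv.swap 0 j)), ?_⟩
    funext i
    show f i = g (Equiv.swap 0 j (Equiv.Perm.decomposeFin.symm (0, σ) i))
    rcases Fin.eq_zero_or_eq_succ i with rfl | ⟨k, rfl⟩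
    · rw [Equiv.Perm.decomposeFin_symm_apply_zero, Equiv.swap_apply_left, hj]
    · rw [Equiv.Perm.decomposeFin_symm_apply_succ]
      have : f k.succ = g' (Equiv.swap (0 : Fin (d+1)) 0 (σ k).succ) := by
        rw [Equiv.swap_self]
        exact congrFun hσ k
      rw [this, hg']
      rfl

open Matrix Finset in
/-- roots of ∏ (X - C (f i)) -/
lemma hw_roots_prod {d : ℕ} (f : Fin d → ℝ) :
    (∏ i, (X - C (f i))).roots = Multiset.map f Finset.univ.val := by
  have : (∏ i, (X - C (f i)))
      = ((Multiset.map f Finset.univ.val).map fun a => X - C a).prod := by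
    rw [Multiset.map_map]
    rfl
  rw [this, Polynomial.roots_multiset_prod_X_sub_C]

open Matrix Finset in
/-- spectral decomposition of a real symmetric matrix -/
lemma hw_decomp {d : ℕ} (A : Matrix (Fin d) (Fin d) ℝ) (hA : A.IsSymm) :
    ∃ (U : Matrix (Fin d) (Fin d) ℝ) (α : Fin d → ℝ),
      U * Uᵀ = 1 ∧ Uᵀ * U = 1 ∧ A = U * Matrix.diagonal α * Uᵀ ∧
      A.charpoly = ∏ i, (X - C (α i)) := by
  have hA' : A.IsHermitian := by
    rwa [Matrix.IsHermitian, Matrix.conjTranspose_eq_transpose_of_trivial]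
  set U : Matrix (Fin d) (Fin d) ℝ :=
    (Matrix.IsHermitian.eigenvectorUnitary hA' : Matrix (Fin d) (Fin d) ℝ) with hUdef
  have h1 : U * Uᵀ = 1 := by
    have := Unitary.mul_star_self (Matrix.IsHermitian.eigenvectorUnitary hA')
    have h2 : U * star U = 1 := congrArg (Subtype.val) this
    rwa [Matrix.star_eq_conjTranspose, Matrix.conjTranspose_eq_transpose_of_trivial] at h2
  have h2 : Uᵀ * U = 1 := by
    have := Unitary.star_mul_self (Matrix.IsHermitian.eigenvectorUnitary hA')
    have h2 : star U * U = 1 := congrArg (Subtype.val) this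
    rwa [Matrix.star_eq_conjTranspose, Matrix.conjTranspose_eq_transpose_of_trivial] at h2
  have h3 : A = U * Matrix.diagonal hA'.eigenvalues * Uᵀ := by
    have hs := hA'.spectral_theorem
    rw [RCLike.ofReal_real_eq_id] at hs
    calc A = U * Matrix.diagonal (id ∘ hA'.eigenvalues) * star U := hs
      _ = U * Matrix.diagonal hA'.eigenvalues * Uᵀ := by
          rw [Matrix.star_eq_conjTranspose, Matrix.conjTranspose_eq_transpose_of_trivial]
          rfl
  refine ⟨U, hA'.eigenvalues, h1, h2, h3, ?_⟩
  have h4 := congrArg Matrix.charpoly h3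
  rw [h4, hw_charpoly_conj _ _ _ h1, hw_charpoly_diagonal]

open Matrix Finset in
lemma hw_trace_form {d : ℕ} (U V : Matrix (Fin d) (Fin d) ℝ) (α β : Fin d → ℝ) :
    Matrix.trace ((U * Matrix.diagonal α * Uᵀ) * (V * Matrix.diagonal β * Vᵀ))
      = ∑ i, ∑ j, α i * β j * ((Uᵀ * V) i j)^2 := by
  set W : Matrix (Fin d) (Fin d) ℝ := Uᵀ * V with hWdef
  have hW : Wᵀ = Vᵀ * U := by
    rw [hWdef, Matrix.transpose_mul, Matrix.transpose_transpose]
  have hassoc : (U * Matrix.diagonal α * Uᵀ) * (V * Matrix.diagonal β * Vᵀ)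
      = U * (Matrix.diagonal α * W * Matrix.diagonal β * Vᵀ) := by
    rw [hWdef]
    simp only [Matrix.mul_assoc]
  rw [hassoc, Matrix.trace_mul_comm U, Matrix.mul_assoc _ _ U, ← hW]
  have : Matrix.trace (Matrix.diagonal α * W * Matrix.diagonal β * Wᵀ)
      = ∑ i, ∑ j, (Matrix.diagonal α * W * Matrix.diagonal β) i j * Wᵀ j i := by
    simp [Matrix.trace, Matrix.mul_apply]
  rw [this]
  refine Finset.sum_congr rfl fun i _ => Finset.sum_congr rfl fun j _ => ?_
  rw [Matrix.mul_diagonal, Matrix.diagonal_mul, Matrix.transpose_apply]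
  ring


/-- The Frobenius norm of a real matrix. -/
noncomputable def frobNorm {m n : Type*} [Fintype m] [Fintype n]
    (A : Matrix m n ℝ) : ℝ :=
  Real.sqrt (∑ i, ∑ j, A i j ^ 2)

open Matrix Finset

/-- (Hoffman–Wielandt) If `A, B` are symmetric real matrices with eigenvalues
`λ_1 ≥ … ≥ λ_d` and `μ_1 ≥ … ≥ μ_d` counted with multiplicity (i.e. the
characteristic polynomials factor as `∏ (X − λ_i)` and `∏ (X − μ_i)` with the
sequences sorted in decreasing order), then `Σ (λ_i − μ_i)² ≤ ‖A − B‖_F²`. -/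
theorem hoffman_wielandt (d : ℕ) (A B : Matrix (Fin d) (Fin d) ℝ)
    (hA : A.IsSymm) (hB : B.IsSymm)
    (lam mu : Fin d → ℝ) (hlam : Antitone lam) (hmu : Antitone mu)
    (hAl : A.charpoly = ∏ i, (X - C (lam i)))
    (hBm : B.charpoly = ∏ i, (X - C (mu i))) :
    ∑ i, (lam i - mu i) ^ 2 ≤ frobNorm (A - B) ^ 2 := by
  classical
  obtain ⟨U, α, hU1, hU2, hAspec, hAchar⟩ := hw_decomp A hA
  obtain ⟨V, β, hV1, hV2, hBspec, hBchar⟩ := hw_decomp B hB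
  -- multiset equalities
  have hmultA : Multiset.map lam Finset.univ.val = Multiset.map α Finset.univ.val := by
    have := congrArg Polynomial.roots (hAl.symm.trans hAchar)
    rwa [hw_roots_prod, hw_roots_prod] at this
  have hmultB : Multiset.map mu Finset.univ.val = Multiset.map β Finset.univ.val := by
    have := congrArg Polynomial.roots (hBm.symm.trans hBchar)
    rwa [hw_roots_prod, hw_roots_prod] at this
  obtain ⟨τA, hτA⟩ := hw_exists_perm_of_multiset_eq lam α hmultA
  obtain ⟨τB, hτB⟩ := hw_exists_perm_of_multiset_eq mu β hmultB
  -- α = lam ∘ τA⁻¹ etc.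
  have hα : ∀ i, α i = lam (τA.symm i) := by
    intro i
    rw [hτA]; simp
  have hβ : ∀ i, β i = mu (τB.symm i) := by
    intro i
    rw [hτB]; simp
  set W : Matrix (Fin d) (Fin d) ℝ := Uᵀ * V with hWdef
  have hWWt : W * Wᵀ = 1 := by
    rw [hWdef, Matrix.transpose_mul, Matrix.transpose_transpose, Matrix.mul_assoc,
      ← Matrix.mul_assoc V, hV1, Matrix.one_mul, hU2]
  have hWtW : Wᵀ * W = 1 := by
    rw [hWdef, Matrix.transpose_mul, Matrix.transpose_transpose, Matrix.mul_assoc,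
      ← Matrix.mul_assoc U, hU1, Matrix.one_mul, hV2]
  -- the doubly stochastic matrix
  set S : Matrix (Fin d) (Fin d) ℝ := Matrix.of fun i j => (W i j)^2 with hSdef
  have hS : S ∈ doublyStochastic ℝ (Fin d) := by
    rw [mem_doublyStochastic_iff_sum]
    refine ⟨fun i j => sq_nonneg _, fun i => ?_, fun j => ?_⟩
    · have := congrFun (congrFun hWWt i) i
      rw [Matrix.mul_apply] at this
      rw [Matrix.one_apply_eq] at this
      calc ∑ j, S i j = ∑ j, W i j * Wᵀ j i := by
            refine Finset.sum_congr rfl fun j _ => ?_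
            rw [hSdef, Matrix.transpose_apply]
            simp [sq]
        _ = 1 := this
    · have := congrFun (congrFun hWtW j) j
      rw [Matrix.mul_apply] at this
      rw [Matrix.one_apply_eq] at this
      calc ∑ i, S i j = ∑ i, Wᵀ j i * W i j := by
            refine Finset.sum_congr rfl fun i _ => ?_
            rw [hSdef, Matrix.transpose_apply]
            simp [sq, mul_comm]
        _ = 1 := this
  -- rearrangement bound for each permutation
  have hmono : Monovary lam mu := hlam.monovary hmu
  have hperm : ∀ σ : Equiv.Perm (Fin d), ∑ i, α i * β (σ i) ≤ ∑ i, lam i * mu i := by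
    intro σ
    set π : Equiv.Perm (Fin d) := (τA.trans σ).trans τB.symm with hπ
    have heq : ∑ i, α i * β (σ i) = ∑ k, lam k * mu (π k) := by
      refine Fintype.sum_equiv τA.symm _ _ fun i => ?_
      rw [hα, hβ, hπ]
      simp
    rw [heq]
    exact hmono.sum_mul_comp_perm_le_sum_mul
  -- trace bound
  have htraceAB : Matrix.trace (A * B) ≤ ∑ i, lam i * mu i := by
    have h1 : Matrix.trace (A * B) = ∑ i, ∑ j, α i * β j * S i j := by
      rw [hAspec, hBspec, hw_trace_form]
      refine Finset.sum_congr rfl fun i _ => Finset.sum_congr rfl fun j _ => ?_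
      rw [hSdef, ← hWdef]
      rfl
    obtain ⟨w, hw0, hwsum, hwS⟩ := exists_eq_sum_perm_of_mem_doublyStochastic hS
    have h2 : ∀ i j, S i j = ∑ σ : Equiv.Perm (Fin d), w σ * (σ.permMatrix ℝ) i j := by
      intro i j
      rw [← hwS]
      simp [Matrix.sum_apply, Equiv.Perm.permMatrix, PEquiv.toMatrix_apply,
        Equiv.toPEquiv_apply, mul_ite, mul_one, mul_zero]
    have h3 : Matrix.trace (A * B) = ∑ σ : Equiv.Perm (Fin d), w σ * ∑ i, α i * β (σ i) := by
      rw [h1]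
      have : ∀ i j, α i * β j * S i j
          = ∑ σ : Equiv.Perm (Fin d), w σ * (α i * β j * (σ.permMatrix ℝ) i j) := by
        intro i j
        rw [h2, Finset.mul_sum]
        refine Finset.sum_congr rfl fun σ _ => by ring
      simp only [this]
      have hsw : ∀ (F : Fin d → Fin d → Equiv.Perm (Fin d) → ℝ),
          ∑ i, ∑ j, ∑ σ : Equiv.Perm (Fin d), F i j σ
            = ∑ σ : Equiv.Perm (Fin d), ∑ i, ∑ j, F i j σ := by
        intro F
        calc ∑ i, ∑ j, ∑ σ : Equiv.Perm (Fin d), F i j σ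
            = ∑ i, ∑ σ : Equiv.Perm (Fin d), ∑ j, F i j σ :=
              Finset.sum_congr rfl fun i _ => Finset.sum_comm
          _ = _ := Finset.sum_comm
      rw [hsw]
      refine Finset.sum_congr rfl fun σ _ => ?_
      rw [Finset.mul_sum]
      refine Finset.sum_congr rfl fun i _ => ?_
      rw [Finset.sum_eq_single (σ i)]
      · have hval : (σ.permMatrix ℝ) i (σ i) = 1 := by
          simp [Equiv.Perm.permMatrix, PEquiv.toMatrix_apply, Equiv.toPEquiv_apply]
        rw [hval]; ring
      · intro j _ hj
        have hval : (σ.permMatrix ℝ) i j = 0 := by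
          simp [Equiv.Perm.permMatrix, PEquiv.toMatrix_apply, Equiv.toPEquiv_apply,
            Ne.symm hj]
        rw [hval]; ring
      · simp
    calc Matrix.trace (A * B) = ∑ σ : Equiv.Perm (Fin d), w σ * ∑ i, α i * β (σ i) := h3
      _ ≤ ∑ σ : Equiv.Perm (Fin d), w σ * ∑ i, lam i * mu i := by
          refine Finset.sum_le_sum fun σ _ => mul_le_mul_of_nonneg_left (hperm σ) (hw0 σ)
      _ = ∑ i, lam i * mu i := by rw [← Finset.sum_mul, hwsum, one_mul]
  -- traces of squares
  have htraceAA : Matrix.trace (A * A) = ∑ i, α i ^ 2 := by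
    rw [hAspec, hw_trace_form]
    have h1 : ∀ i j : Fin d, (Uᵀ * U) i j = (1 : Matrix (Fin d) (Fin d) ℝ) i j := fun i j =>
      congrFun (congrFun hU2 i) j
    calc ∑ i, ∑ j, α i * α j * ((Uᵀ * U) i j)^2
        = ∑ i, ∑ j, α i * α j * ((if i = j then (1:ℝ) else 0))^2 := by
          refine Finset.sum_congr rfl fun i _ => Finset.sum_congr rfl fun j _ => ?_
          rw [h1, Matrix.one_apply]
      _ = ∑ i, α i ^ 2 := by
          refine Finset.sum_congr rfl fun i _ => ?_
          rw [Finset.sum_eq_single i]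
          · simp [sq]
          · intro j _ hj
            simp [Ne.symm hj]
          · simp
  have htraceBB : Matrix.trace (B * B) = ∑ i, β i ^ 2 := by
    rw [hBspec, hw_trace_form]
    have h1 : ∀ i j : Fin d, (Vᵀ * V) i j = (1 : Matrix (Fin d) (Fin d) ℝ) i j := fun i j =>
      congrFun (congrFun hV2 i) j
    calc ∑ i, ∑ j, β i * β j * ((Vᵀ * V) i j)^2
        = ∑ i, ∑ j, β i * β j * ((if i = j then (1:ℝ) else 0))^2 := by
          refine Finset.sum_congr rfl fun i _ => Finset.sum_congr rfl fun j _ => ?_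
          rw [h1, Matrix.one_apply]
      _ = ∑ i, β i ^ 2 := by
          refine Finset.sum_congr rfl fun i _ => ?_
          rw [Finset.sum_eq_single i]
          · simp [sq]
          · intro j _ hj
            simp [Ne.symm hj]
          · simp
  -- sums of squares transfer
  have hsumA : ∑ i, lam i ^ 2 = ∑ i, α i ^ 2 := by
    rw [hτA]
    exact Equiv.sum_comp τA (fun k => α k ^ 2)
  have hsumB : ∑ i, mu i ^ 2 = ∑ i, β i ^ 2 := by
    rw [hτB]
    exact Equiv.sum_comp τB (fun k => β k ^ 2)
  -- frobenius norm
  have hfrob : frobNorm (A - B) ^ 2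
      = Matrix.trace (A * A) + Matrix.trace (B * B) - 2 * Matrix.trace (A * B) := by
    have hnn : (0:ℝ) ≤ ∑ i, ∑ j, (A - B) i j ^ 2 :=
      Finset.sum_nonneg fun i _ => Finset.sum_nonneg fun j _ => sq_nonneg _
    simp only [frobNorm]
    rw [Real.sq_sqrt hnn]
    have hsym : ∀ i j, (A - B) j i = (A - B) i j := by
      intro i j
      have hA' : A j i = A i j := by
        have := congrFun (congrFun hA i) j
        rwa [Matrix.transpose_apply] at this
      have hB' : B j i = B i j := by
        have := congrFun (congrFun hB i) j
        rwa [Matrix.transpose_apply] at this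
      simp [Matrix.sub_apply, hA', hB']
    have h1 : Matrix.trace ((A - B) * (A - B)) = ∑ i, ∑ j, (A - B) i j ^ 2 := by
      rw [Matrix.trace]
      refine Finset.sum_congr rfl fun i _ => ?_
      rw [Matrix.diag_apply, Matrix.mul_apply]
      refine Finset.sum_congr rfl fun j _ => ?_
      rw [hsym i j, sq]
    have h2 : (A - B) * (A - B) = A * A - A * B - B * A + B * B := by
      noncomm_ring
    rw [← h1, h2, Matrix.trace_add, Matrix.trace_sub, Matrix.trace_sub,
      Matrix.trace_mul_comm B A]
    ring
  -- final assembly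
  have hexp : ∑ i, (lam i - mu i) ^ 2
      = ∑ i, lam i ^ 2 + ∑ i, mu i ^ 2 - 2 * ∑ i, lam i * mu i := by
    rw [← Finset.sum_add_distrib, Finset.mul_sum, ← Finset.sum_sub_distrib]
    refine Finset.sum_congr rfl fun i _ => by ring
  rw [hexp, hfrob, htraceAA, htraceBB, ← hsumA, ← hsumB]
  linarith [htraceAB]
end
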